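/- Let f be a proper int-nearly convex function on a topological vector space X. Then int(epi f) = {(x, λ) | x ∈ int(dom f) and λ > f(x)}. -/

import Mathlib

open Topology Filter


theorem stmt14 {X : Type*} [AddCommGroup X] [Module ℝ X] [TopologicalSpace X]
    [IsTopologicalAddGroup X] [ContinuousSMul ℝ X] (f : X → EReal)
    (hdom : ∃ x, f x ≠ ⊤) (hbot : ∀ x, f x ≠ ⊥)
    (hnc : ∃ C : Set (X × ℝ), Convex ℝ C ∧ (interior C).Nonempty ∧
      C ⊆ {p : X × ℝ | f p.1 ≤ (p.2 : EReal)} ∧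
      {p : X × ℝ | f p.1 ≤ (p.2 : EReal)} ⊆ closure C) :
    interior {p : X × ℝ | f p.1 ≤ (p.2 : EReal)} =
      {p : X × ℝ | p.1 ∈ interior {x : X | f x < ⊤} ∧ f p.1 < (p.2 : EReal)} := by
  set E : Set (X × ℝ) := {p : X × ℝ | f p.1 ≤ (p.2 : EReal)} with hE
  ext ⟨x, l⟩
  simp only [Set.mem_setOf_eq]
  constructor
  · intro h
    have hmem : interior E ∈ 𝓝 (x, l) := isOpen_interior.mem_nhds h
    rw [mem_nhds_prod_iff] at hmem
    obtain ⟨U, hU, V, hV, hUV⟩ := hmem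
    obtain ⟨ε, hε, hball⟩ := Metric.mem_nhds_iff.1 hV
    have hvV : l - ε / 2 ∈ V := by
      apply hball
      simp only [Metric.mem_ball, Real.dist_eq]
      rw [abs_of_nonpos (by linarith)]
      linarith
    constructor
    · rw [mem_interior_iff_mem_nhds]
      filter_upwards [hU] with y hy
      have : (y, l - ε / 2) ∈ E := interior_subset (hUV ⟨hy, hvV⟩)
      exact lt_of_le_of_lt this (EReal.coe_lt_top _)
    · have hx : x ∈ U := mem_of_mem_nhds hU
      have : (x, l - ε / 2) ∈ E := interior_subset (hUV ⟨hx, hvV⟩)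
      refine lt_of_le_of_lt this ?_
      exact_mod_cast (by linarith : l - ε / 2 < l)
  · rintro ⟨hx, hfl⟩
    obtain ⟨C, hCconv, ⟨p₀, hp₀⟩, hCE, hEC⟩ := hnc
    have hintCE : interior C ⊆ interior E := interior_mono hCE
    -- find a point x₁ = x + t • (x - p₀.1) still in the domain, with t > 0
    have hcont : Continuous fun t : ℝ => x + t • (x - p₀.1) := by continuity
    have hpre : (fun t : ℝ => x + t • (x - p₀.1)) ⁻¹' interior {x : X | f x < ⊤} ∈ 𝓝 0 := by
      apply hcont.continuousAt.preimage_mem_nhds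
      simpa using isOpen_interior.mem_nhds hx
    obtain ⟨ε, hε, hball⟩ := Metric.mem_nhds_iff.1 hpre
    set t : ℝ := ε / 2 with ht
    have htpos : 0 < t := by positivity
    have hx₁mem : x + t • (x - p₀.1) ∈ interior {x : X | f x < ⊤} := by
      apply hball
      simp only [Metric.mem_ball, Real.dist_eq, sub_zero]
      rw [abs_of_pos htpos]
      linarith
    set x₁ : X := x + t • (x - p₀.1) with hx₁
    have hfx₁top : f x₁ ≠ ⊤ := (interior_subset hx₁mem).ne
    have hfx₁bot : f x₁ ≠ ⊥ := hbot _
    set μ : ℝ := (f x₁).toReal with hμ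
    have hfx₁ : f x₁ = (μ : EReal) := (EReal.coe_toReal hfx₁top hfx₁bot).symm
    have hq : ((x₁, μ) : X × ℝ) ∈ E := by
      simp only [hE, Set.mem_setOf_eq, hfx₁]; exact le_refl _
    -- the combination s • p₀ + (1 - s) • (x₁, μ) with s = t/(1+t) has first coordinate x
    set s : ℝ := t / (1 + t) with hs
    have h1t : (0 : ℝ) < 1 + t := by linarith
    have hspos : 0 < s := div_pos htpos h1t
    have hs1 : s < 1 := by
      rw [hs, div_lt_one h1t]; linarith
    have hcombo : s • p₀ + (1 - s) • ((x₁, μ) : X × ℝ) =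
        (x, s * p₀.2 + (1 - s) * μ) := by
      have h1s : (1 : ℝ) - s = 1 / (1 + t) := by
        rw [hs]; field_simp; ring
      ext
      · show s • p₀.1 + (1 - s) • x₁ = x
        rw [hx₁, h1s, hs]
        match_scalars <;> field_simp <;> ring
      · rfl
    set ν : ℝ := s * p₀.2 + (1 - s) * μ with hν
    have hνC : ((x, ν) : X × ℝ) ∈ interior C := by
      rw [← hcombo]
      exact hCconv.combo_interior_closure_mem_interior hp₀ (hEC hq) hspos
        (by linarith) (by ring)
    -- now move vertically from ν to l
    have hfxtop : f x ≠ ⊤ := hfl.ne_top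
    have hfxbot : f x ≠ ⊥ := hbot x
    have hfx : f x = ((f x).toReal : EReal) := (EReal.coe_toReal hfxtop hfxbot).symm
    set m : ℝ := (f x).toReal with hm
    have hml : m < l := by
      rw [hfx] at hfl; exact_mod_cast hfl
    rcases lt_trichotomy l ν with hlν | hlν | hlν
    · -- l < ν : combine (x, ν) ∈ interior C with (x, m) ∈ E ⊆ closure C
      have hqm : ((x, m) : X × ℝ) ∈ E := by
        simp only [hE, Set.mem_setOf_eq, hfx]; exact le_refl _
      have hνm : 0 < ν - m := by linarith
      set a : ℝ := (l - m) / (ν - m) with ha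
      set b : ℝ := (ν - l) / (ν - m) with hb
      have hapos : 0 < a := div_pos (by linarith) hνm
      have hbpos : 0 < b := div_pos (by linarith) hνm
      have hab : a + b = 1 := by
        rw [ha, hb]; field_simp; ring
      have hcombo2 : a • ((x, ν) : X × ℝ) + b • ((x, m) : X × ℝ) = (x, l) := by
        ext
        · show a • x + b • x = x
          rw [← add_smul, hab, one_smul]
        · show a * ν + b * m = l
          rw [ha, hb]; field_simp; ring
      rw [← hcombo2]
      exact hintCE (hCconv.combo_interior_closure_mem_interior hνC (hEC hqm)
        hapos hbpos.le hab)
    · rw [← hlν] at hνC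
      exact hintCE hνC
    · -- ν < l : combine (x, ν) with (x, 2l - ν) ∈ E
      have hqm : ((x, 2 * l - ν) : X × ℝ) ∈ E := by
        simp only [hE, Set.mem_setOf_eq, hfx]
        exact_mod_cast (by linarith : m ≤ 2 * l - ν)
      have hcombo2 : (1/2 : ℝ) • ((x, ν) : X × ℝ) +
          (1/2 : ℝ) • ((x, 2 * l - ν) : X × ℝ) = (x, l) := by
        ext
        · show (1/2 : ℝ) • x + (1/2 : ℝ) • x = x
          rw [← add_smul]; norm_num
        · show (1/2 : ℝ) * ν + (1/2 : ℝ) * (2 * l - ν) = l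
          ring
      rw [← hcombo2]
      exact hintCE (hCconv.combo_interior_closure_mem_interior hνC (hEC hqm)
        (by norm_num) (by norm_num) (by norm_num))
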